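/- Let L be convolution with an even, 2π-periodic, integrable kernel K_P that is strictly decreasing on (0,π). Suppose φ ∈ C¹(𝕋) is a nontrivial, even, 2π-periodic solution of (μ−φ)φ′ = Lφ′ which is nonincreasing on (0,π). Then φ′(x) < 0 and φ(x) < μ for every x ∈ (0,π). -/

import Mathlib

open MeasureTheory Real

private lemma shiftII {f : ℝ → ℝ} {a b a' b' : ℝ}
    (h : IntervalIntegrable f volume a b) (ha : a' = a) (hb : b' = b) :
    IntervalIntegrable f volume a' b' := by rw [ha, hb]; exact h

set_option maxHeartbeats 1000000 in
/-- A nontrivial, even, periodic `C¹` solution which is nonincreasing on `(0,π)` is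
strictly decreasing there and stays strictly below the wave speed. -/
theorem strict_decrease_below_speed
    (KP φ : ℝ → ℝ) (μ : ℝ)
    (hKeven : ∀ x, KP (-x) = KP x)
    (hKper : Function.Periodic KP (2 * π))
    (hKint : IntegrableOn KP (Set.Icc (-π) π))
    (hKdec : StrictAntiOn KP (Set.Ioo 0 π))
    (hφC1 : ContDiff ℝ 1 φ)
    (hφeven : ∀ x, φ (-x) = φ x)
    (hφper : Function.Periodic φ (2 * π))
    (hφnontriv : ¬ (∀ x, deriv φ x = 0))
    (hφmono : AntitoneOn φ (Set.Ioo 0 π))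
    (heq : ∀ x, (μ - φ x) * deriv φ x
      = ∫ y in Set.Icc (-π) π, KP (x - y) * deriv φ y) :
    ∀ x ∈ Set.Ioo 0 π, deriv φ x < 0 ∧ φ x < μ := by
  have hπ : (0:ℝ) < π := pi_pos
  -- basic facts about the derivative
  have hdc : Continuous (deriv φ) := hφC1.continuous_deriv le_rfl
  have hodd : ∀ y, deriv φ (-y) = - deriv φ y := by
    intro y
    have h1 : deriv (fun t => φ (-t)) y = - deriv φ (-y) := deriv_comp_neg φ y
    have h2 : (fun t => φ (-t)) = φ := funext hφeven
    rw [h2] at h1; linarith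
  have hper' : Function.Periodic (deriv φ) (2*π) := by
    intro y
    have h1 : deriv (fun t => φ (t + 2*π)) y = deriv φ (y + 2*π) := deriv_comp_add_const φ (2*π) y
    have h2 : (fun t => φ (t + 2*π)) = φ := funext hφper
    rw [h2] at h1; exact h1.symm
  have hnonpos : ∀ y ∈ Set.Ioo (0:ℝ) π, deriv φ y ≤ 0 := by
    intro y hy
    have hd : HasDerivAt φ (deriv φ y) y := ((hφC1.differentiable one_ne_zero) y).hasDerivAt
    rw [hasDerivAt_iff_tendsto_slope] at hd
    have hmono : Filter.Tendsto (slope φ y) (nhdsWithin y (Set.Ioi y)) (nhds (deriv φ y)) :=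
      hd.mono_left (nhdsWithin_mono y fun z hz => Set.mem_compl_singleton_iff.mpr (ne_of_gt hz))
    refine le_of_tendsto hmono ?_
    filter_upwards [Ioo_mem_nhdsGT_of_mem (Set.mem_Ico.mpr ⟨le_refl y, hy.2⟩)] with z hz
    have hle : φ z ≤ φ y := hφmono hy ⟨hy.1.trans hz.1, hz.2⟩ hz.1.le
    rw [slope_def_field]
    exact div_nonpos_of_nonpos_of_nonneg (by linarith) (by linarith [hz.1])
  have hd0 : deriv φ 0 = 0 := by
    have h := hodd 0; rw [neg_zero] at h; linarith
  have hdmpi : deriv φ (-π) = 0 := by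
    have h1 := hodd π
    have h2 := hper' (-π)
    have h3 : -π + 2*π = π := by ring
    rw [h3] at h2
    linarith
  -- a point where the derivative is strictly negative
  obtain ⟨x0, hx0mem, hx0⟩ : ∃ x0 ∈ Set.Ioo (0:ℝ) π, deriv φ x0 < 0 := by
    by_contra hcon
    push_neg at hcon
    apply hφnontriv
    have hIoo : ∀ z ∈ Set.Ioo (0:ℝ) π, deriv φ z = 0 := fun z hz =>
      le_antisymm (hnonpos z hz) (hcon z hz)
    have hIco : ∀ z ∈ Set.Ico (-π) π, deriv φ z = 0 := by
      intro z hz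
      rcases eq_or_lt_of_le hz.1 with h|h
      · rw [← h]; exact hdmpi
      rcases lt_trichotomy z 0 with h0|h0|h0
      · have h1 := hIoo (-z) ⟨by linarith, by linarith⟩
        have h2 := hodd z
        rw [h1] at h2; linarith
      · rw [h0]; exact hd0
      · exact hIoo z ⟨h0, hz.2⟩
    intro y
    set n : ℤ := ⌊(y + π) / (2*π)⌋ with hn
    have h2π : (0:ℝ) < 2*π := by linarith
    have hb1 : (n:ℝ)*(2*π) ≤ y + π := (le_div_iff₀ h2π).mp (Int.floor_le _)
    have hb2 : y + π < ((n:ℝ)+1)*(2*π) := (div_lt_iff₀ h2π).mp (Int.lt_floor_add_one _)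
    have hz : y - (n:ℝ)*(2*π) ∈ Set.Ico (-π) π := ⟨by linarith, by nlinarith⟩
    have hred : deriv φ (y - (n:ℝ)*(2*π)) = deriv φ y := hper'.sub_int_mul_eq n
    rw [← hred]
    exact hIco _ hz
  intro x hx
  -- key kernel comparison
  have key : ∀ z ∈ Set.Ioo (0:ℝ) π, z ≠ x → x + z ≠ π → KP (x + z) < KP (x - z) := by
    intro z hz hzx hzpi
    have hax : KP |x - z| = KP (x - z) := by
      rcases abs_cases (x - z) with ⟨h,_⟩|⟨h,_⟩
      · rw [h]
      · rw [h]; exact hKeven (x - z)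
    have habs : |x - z| ∈ Set.Ioo (0:ℝ) π := by
      constructor
      · exact abs_pos.mpr (sub_ne_zero.mpr (Ne.symm hzx))
      · rcases abs_cases (x - z) with ⟨h,_⟩|⟨h,_⟩ <;> rw [h] <;>
          [linarith [hz.1, hx.2]; linarith [hx.1, hz.2]]
    rw [← hax]
    rcases lt_trichotomy (x + z) π with hc|hc|hc
    · refine hKdec habs ⟨by linarith [hx.1, hz.1], hc⟩ ?_
      rcases abs_cases (x - z) with ⟨h,_⟩|⟨h,_⟩ <;> rw [h] <;> linarith [hx.1, hz.1]
    · exact absurd hc hzpi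
    · have hper2 : KP (x + z) = KP (2*π - (x + z)) := by
        have h1 : KP ((x + z - 2*π) + 2*π) = KP (x + z - 2*π) := hKper (x + z - 2*π)
        have e2 : (x + z - 2*π) + 2*π = x + z := by ring
        rw [e2] at h1
        have e3 : (2*π - (x + z)) = -(x + z - 2*π) := by ring
        rw [h1, e3]
        exact (hKeven _).symm
      rw [hper2]
      refine hKdec habs ⟨by linarith [hx.2, hz.2], by linarith⟩ ?_
      rcases abs_cases (x - z) with ⟨h,_⟩|⟨h,_⟩ <;> rw [h] <;> linarith [hx.2, hz.2]
  -- pointwise sign off a finite bad set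
  have claim : ∀ y ∈ Set.Icc (-π) π, y ∉ ({0, x, -x, π - x, x - π, π, -π} : Set ℝ) →
      (KP (x - y) - KP (x + y)) * deriv φ y ≤ 0 := by
    intro y hy hbad
    simp only [Set.mem_insert_iff, Set.mem_singleton_iff, not_or] at hbad
    obtain ⟨h0, hx1, hx2, hx3, hx4, hP, hmP⟩ := hbad
    rcases lt_trichotomy y 0 with hneg|h|hpos
    · have hmem : -y ∈ Set.Ioo (0:ℝ) π := ⟨by linarith,
        by have := lt_of_le_of_ne hy.1 (Ne.symm hmP); linarith⟩
      have hk := key (-y) hmem (by intro hc; exact hx2 (by linarith)) 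
        (by intro hc; exact hx4 (by linarith))
      have e1 : x + -y = x - y := by ring
      have e2 : x - -y = x + y := by ring
      rw [e1, e2] at hk
      have hd1 : deriv φ (-y) ≤ 0 := hnonpos (-y) hmem
      have hd2 := hodd y
      nlinarith
    · exact absurd h h0
    · have hmem : y ∈ Set.Ioo (0:ℝ) π := ⟨hpos, lt_of_le_of_ne hy.2 hP⟩
      have hk := key y hmem hx1 (by intro hc; exact hx3 (by linarith))
      have hd := hnonpos y hmem
      nlinarith
  -- integrability of the kernel translates
  have hbase : IntervalIntegrable KP volume (-π) π := by
    apply IntegrableOn.intervalIntegrable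
    rwa [Set.uIcc_of_le (by linarith)]
  have hA1 : IntervalIntegrable KP volume π (3*π) := by
    have h := hbase.comp_sub_right (2*π)
    have h2 : (fun y => KP (y - 2*π)) = KP := funext fun y => hKper.sub_eq y
    rw [h2] at h
    exact shiftII h (by ring) (by ring)
  have hbig : IntervalIntegrable KP volume (-π) (3*π) := hbase.trans hA1
  have hKxint : IntervalIntegrable KP volume (x - π) (x + π) := by
    apply hbig.mono_set
    rw [Set.uIcc_of_le (by linarith), Set.uIcc_of_le (by linarith)]
    exact Set.Icc_subset_Icc (by linarith [hx.1]) (by linarith [hx.2])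
  have intKx : IntervalIntegrable (fun y => KP (x - y)) volume (-π) π := by
    have h := (hKxint.comp_sub_left x).symm
    exact shiftII h (by ring) (by ring)
  have intKx' : IntervalIntegrable (fun y => KP (x + y)) volume (-π) π := by
    have h := hKxint.comp_add_left x
    exact shiftII h (by ring) (by ring)
  have intF : IntervalIntegrable (fun y => KP (x - y) * deriv φ y) volume (-π) π :=
    intKx.mul_continuousOn hdc.continuousOn
  have intG : IntervalIntegrable (fun y => KP (x + y) * deriv φ y) volume (-π) π :=
    intKx'.mul_continuousOn hdc.continuousOn
  have intH : IntervalIntegrable (fun y => (KP (x - y) - KP (x + y)) * deriv φ y)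
      volume (-π) π := by
    have h := intF.sub intG
    have e : (fun y => KP (x - y) * deriv φ y - KP (x + y) * deriv φ y)
        = fun y => (KP (x - y) - KP (x + y)) * deriv φ y := by funext y; ring
    rwa [e] at h
  -- the equation in interval-integral form
  have heqI : (μ - φ x) * deriv φ x = ∫ y in (-π)..π, KP (x - y) * deriv φ y := by
    rw [heq x, MeasureTheory.integral_Icc_eq_integral_Ioc,
      ← intervalIntegral.integral_of_le (by linarith : -π ≤ π)]
  -- reflection identity
  have hrefl : (∫ y in (-π)..π, KP (x + y) * deriv φ y)
      = - ∫ y in (-π)..π, KP (x - y) * deriv φ y := by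
    calc (∫ y in (-π)..π, KP (x + y) * deriv φ y)
        = ∫ y in (-π)..π, (fun u => KP (x - u) * (- deriv φ u)) (-y) := by
          apply intervalIntegral.integral_congr
          intro y _
          simp only
          rw [hodd y, sub_neg_eq_add, neg_neg]
      _ = ∫ u in (-π)..π, KP (x - u) * (- deriv φ u) := by
          rw [intervalIntegral.integral_comp_neg (fun u => KP (x - u) * (- deriv φ u))]
          norm_num
      _ = - ∫ y in (-π)..π, KP (x - y) * deriv φ y := by
          simp_rw [mul_neg]
          exact intervalIntegral.integral_neg
  have h2I : 2 * ((μ - φ x) * deriv φ x)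
      = ∫ y in (-π)..π, (KP (x - y) - KP (x + y)) * deriv φ y := by
    calc 2 * ((μ - φ x) * deriv φ x)
        = (∫ y in (-π)..π, KP (x - y) * deriv φ y)
          - ∫ y in (-π)..π, KP (x + y) * deriv φ y := by rw [hrefl, heqI]; ring
      _ = ∫ y in (-π)..π, (KP (x - y) * deriv φ y - KP (x + y) * deriv φ y) :=
          (intervalIntegral.integral_sub intF intG).symm
      _ = ∫ y in (-π)..π, (KP (x - y) - KP (x + y)) * deriv φ y := by
          apply intervalIntegral.integral_congr
          intro y _; ring
  -- choose a good point y1 and radius δ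
  have hUopen : IsOpen {y | deriv φ y < 0} := isOpen_lt hdc continuous_const
  obtain ⟨r, hr, hball⟩ := Metric.isOpen_iff.mp (hUopen.inter isOpen_Ioo) x0 ⟨hx0, hx0mem⟩
  rw [Real.ball_eq_Ioo] at hball
  have hIooInf : (Set.Ioo (x0 - r) (x0 + r)).Infinite := Set.Ioo_infinite (by linarith)
  obtain ⟨y1, hy1U, hy1bad⟩ := (hIooInf.diff (Set.toFinite ({x, π - x} : Set ℝ))).nonempty
  simp only [Set.mem_insert_iff, Set.mem_singleton_iff, not_or] at hy1bad
  obtain ⟨hy1x, hy1pi⟩ := hy1bad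
  have hy1m := hball hy1U
  have hy1neg : deriv φ y1 < 0 := hy1m.1
  have hy1mem : y1 ∈ Set.Ioo (0:ℝ) π := hy1m.2
  set a1 := |x - y1| with ha1def
  set b1 := π - |x + y1 - π| with hb1def
  have ha1pos : 0 < a1 := abs_pos.mpr (sub_ne_zero.mpr (Ne.symm hy1x))
  have hb1lt : b1 < π := by
    have h : 0 < |x + y1 - π| := abs_pos.mpr (by intro hc; exact hy1pi (by linarith))
    rw [hb1def]; linarith
  have hb1pos : 0 < b1 := by
    have h : |x + y1 - π| < π := abs_lt.mpr ⟨by linarith [hx.1, hy1mem.1], by linarith [hx.2, hy1mem.2]⟩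
    rw [hb1def]; linarith
  have ha1b1 : a1 < b1 := by
    rw [ha1def, hb1def]
    rcases abs_cases (x - y1) with ⟨h1,_⟩|⟨h1,_⟩ <;>
      rcases abs_cases (x + y1 - π) with ⟨h2,_⟩|⟨h2,_⟩ <;> rw [h1, h2] <;>
      linarith [hx.1, hx.2, hy1mem.1, hy1mem.2]
  have hρ1 : 0 < y1 - (x0 - r) := by linarith [hy1U.1]
  have hρ2 : 0 < (x0 + r) - y1 := by linarith [hy1U.2]
  set δ := min (min ((y1 - (x0 - r))/2) (((x0 + r) - y1)/2))
      (min ((b1 - a1)/3) (min (a1/2) ((π - b1)/2))) with hδdef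
  have hδpos : 0 < δ := by
    refine lt_min (lt_min ?_ ?_) (lt_min ?_ (lt_min ?_ ?_)) <;> linarith
  have hδa : δ ≤ (y1 - (x0 - r))/2 := le_trans (min_le_left _ _) (min_le_left _ _)
  have hδb : δ ≤ ((x0 + r) - y1)/2 := le_trans (min_le_left _ _) (min_le_right _ _)
  have hδc : δ ≤ (b1 - a1)/3 := le_trans (min_le_right _ _) (min_le_left _ _)
  have hδd : δ ≤ a1/2 := le_trans (min_le_right _ _) (le_trans (min_le_right _ _) (min_le_left _ _))
  have hδe : δ ≤ (π - b1)/2 :=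
    le_trans (min_le_right _ _) (le_trans (min_le_right _ _) (min_le_right _ _))
  have hJsub : Set.Icc (y1 - δ) (y1 + δ) ⊆ Set.Ioo (x0 - r) (x0 + r) := by
    intro y hy
    exact ⟨by linarith [hy.1], by linarith [hy.2]⟩
  have hcpos : 0 < y1 - δ := (hball (hJsub ⟨le_refl _, by linarith⟩)).2.1
  have hdlt : y1 + δ < π := (hball (hJsub ⟨by linarith, le_refl _⟩)).2.2
  have hAB : a1 + δ < b1 - δ := by linarith
  have hA : a1 + δ ∈ Set.Ioo (0:ℝ) π := ⟨by linarith, by linarith⟩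
  have hB : b1 - δ ∈ Set.Ioo (0:ℝ) π := ⟨by linarith, by linarith⟩
  have hκpos : 0 < KP (a1 + δ) - KP (b1 - δ) := sub_pos.mpr (hKdec hA hB hAB)
  -- pointwise bound on the middle interval
  have hJbound : ∀ y ∈ Set.Icc (y1 - δ) (y1 + δ),
      (KP (x - y) - KP (x + y)) * deriv φ y ≤ (KP (a1 + δ) - KP (b1 - δ)) * deriv φ y := by
    intro y hy
    have hyy1 : |y - y1| ≤ δ := abs_le.mpr ⟨by linarith [hy.1], by linarith [hy.2]⟩
    have hyU := hball (hJsub hy)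
    have hyneg : deriv φ y < 0 := hyU.1
    have hymem : y ∈ Set.Ioo (0:ℝ) π := hyU.2
    -- bounds on |x - y|
    have hα1 : |x - y| ≤ a1 + δ := by
      have h := abs_add_le (x - y1) (y1 - y)
      have e : (x - y1) + (y1 - y) = x - y := by ring
      rw [e] at h
      have h2 : |y1 - y| ≤ δ := by rw [abs_sub_comm]; exact hyy1
      rw [ha1def]; linarith
    have hα2 : a1 - δ ≤ |x - y| := by
      have h := abs_add_le (x - y) (y - y1)
      have e : (x - y) + (y - y1) = x - y1 := by ring
      rw [e] at h
      rw [ha1def]; linarith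
    have hαpos : 0 < |x - y| := by linarith
    -- bounds on π - |x + y - π|
    have hβ1 : b1 - δ ≤ π - |x + y - π| := by
      have h := abs_add_le (x + y1 - π) (y - y1)
      have e : (x + y1 - π) + (y - y1) = x + y - π := by ring
      rw [e] at h
      rw [hb1def]; linarith
    have hβ2 : π - |x + y - π| ≤ b1 + δ := by
      have h := abs_add_le (x + y - π) (y1 - y)
      have e : (x + y - π) + (y1 - y) = x + y1 - π := by ring
      rw [e] at h
      have h2 : |y1 - y| ≤ δ := by rw [abs_sub_comm]; exact hyy1
      rw [hb1def]; linarith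
    -- identities
    have hid1 : KP (x - y) = KP |x - y| := by
      rcases abs_cases (x - y) with ⟨h,_⟩|⟨h,_⟩
      · rw [h]
      · rw [h]
        exact (hKeven _).symm
    have hid2 : KP (x + y) = KP (π - |x + y - π|) := by
      rcases abs_cases (x + y - π) with ⟨h2,_⟩|⟨h2,_⟩
      · rw [h2]
        have h1 : KP ((x + y - 2*π) + 2*π) = KP (x + y - 2*π) := hKper (x + y - 2*π)
        have e2 : (x + y - 2*π) + 2*π = x + y := by ring
        rw [e2] at h1
        have e3 : π - (x + y - π) = -(x + y - 2*π) := by ring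
        rw [e3, hKeven]
        exact h1
      · rw [h2]
        congr 1; ring
    have hKa : KP (a1 + δ) ≤ KP |x - y| := by
      rcases eq_or_lt_of_le hα1 with h|h
      · rw [h]
      · exact (hKdec ⟨hαpos, by linarith [hA.2]⟩ hA h).le
    have hKb : KP (π - |x + y - π|) ≤ KP (b1 - δ) := by
      rcases eq_or_lt_of_le hβ1 with h|h
      · rw [← h]
      · exact (hKdec hB ⟨by linarith [hB.1], by linarith⟩ h).le
    have hhy : KP (a1 + δ) - KP (b1 - δ) ≤ KP (x - y) - KP (x + y) := by
      rw [hid1, hid2]; linarith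
    exact mul_le_mul_of_nonpos_right hhy hyneg.le
  -- integrability on subintervals
  have hsub3 : ∀ u v : ℝ, -π ≤ u → v ≤ π → u ≤ v →
      IntervalIntegrable (fun y => (KP (x - y) - KP (x + y)) * deriv φ y) volume u v := by
    intro u v hu hv huv
    apply intH.mono_set
    rw [Set.uIcc_of_le huv, Set.uIcc_of_le (by linarith : -π ≤ π)]
    exact Set.Icc_subset_Icc hu hv
  -- the middle part is strictly negative
  have hmid : (∫ y in (y1-δ)..(y1+δ), (KP (x - y) - KP (x + y)) * deriv φ y) < 0 := by
    have hmono := intervalIntegral.integral_mono_on (by linarith : y1-δ ≤ y1+δ)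
      (hsub3 (y1-δ) (y1+δ) (by linarith) (by linarith) (by linarith))
      ((continuous_const.mul hdc).intervalIntegrable _ _) hJbound
    have hrhs : (∫ y in (y1-δ)..(y1+δ), (KP (a1 + δ) - KP (b1 - δ)) * deriv φ y)
        = (KP (a1 + δ) - KP (b1 - δ)) * ∫ y in (y1-δ)..(y1+δ), deriv φ y :=
      intervalIntegral.integral_const_mul _ _
    have hneg : (∫ y in (y1-δ)..(y1+δ), deriv φ y) < 0 := by
      have hpos2 : 0 < ∫ y in (y1-δ)..(y1+δ), -deriv φ y := by
        apply intervalIntegral.intervalIntegral_pos_of_pos_on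
          (hdc.neg.intervalIntegrable _ _)
        · intro y hy
          have h5 : deriv φ y < 0 := (hball (hJsub (Set.Ioo_subset_Icc_self hy))).1
          rw [Pi.neg_apply]; linarith
        · linarith
      rw [intervalIntegral.integral_neg] at hpos2; linarith
    calc (∫ y in (y1-δ)..(y1+δ), (KP (x - y) - KP (x + y)) * deriv φ y)
        ≤ (KP (a1 + δ) - KP (b1 - δ)) * ∫ y in (y1-δ)..(y1+δ), deriv φ y := by
          rw [← hrhs]; exact hmono
      _ < 0 := mul_neg_of_pos_of_neg hκpos hneg
  -- the outer parts are nonpositive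
  have hbadnull : volume ({0, x, -x, π - x, x - π, π, -π} : Set ℝ) = 0 :=
    (Set.toFinite _).measure_zero _
  have hbad_ae : ∀ᵐ y ∂(volume : Measure ℝ),
      y ∉ ({0, x, -x, π - x, x - π, π, -π} : Set ℝ) := by
    exact MeasureTheory.measure_eq_zero_iff_ae_notMem.mp hbadnull
  have houter : ∀ u v : ℝ, -π ≤ u → v ≤ π → u ≤ v →
      (∫ y in u..v, (KP (x - y) - KP (x + y)) * deriv φ y) ≤ 0 := by
    intro u v hu hv huv
    have h1 : 0 ≤ ∫ y in u..v, -((KP (x - y) - KP (x + y)) * deriv φ y) := by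
      apply intervalIntegral.integral_nonneg_of_ae_restrict huv
      filter_upwards [MeasureTheory.ae_restrict_mem measurableSet_Icc,
        MeasureTheory.ae_restrict_of_ae hbad_ae] with y hy hb
      have hcl := claim y ⟨by linarith [hy.1], by linarith [hy.2]⟩ hb
      show (0:ℝ) ≤ -((KP (x - y) - KP (x + y)) * deriv φ y)
      linarith
    rw [intervalIntegral.integral_neg] at h1; linarith
  -- split and combine
  have e1 := intervalIntegral.integral_add_adjacent_intervals
    (hsub3 (-π) (y1-δ) le_rfl (by linarith) (by linarith))
    (hsub3 (y1-δ) (y1+δ) (by linarith) (by linarith) (by linarith))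
  have e2 := intervalIntegral.integral_add_adjacent_intervals
    (hsub3 (-π) (y1+δ) le_rfl (by linarith) (by linarith))
    (hsub3 (y1+δ) π (by linarith) le_rfl (by linarith))
  have htot : (∫ y in (-π)..π, (KP (x - y) - KP (x + y)) * deriv φ y) < 0 := by
    rw [← e2, ← e1]
    have o1 := houter (-π) (y1-δ) le_rfl (by linarith) (by linarith)
    have o3 := houter (y1+δ) π (by linarith) le_rfl (by linarith)
    linarith
  rw [← h2I] at htot
  have hIneg : (μ - φ x) * deriv φ x < 0 := by linarith
  have hdx : deriv φ x < 0 := by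
    rcases lt_or_eq_of_le (hnonpos x hx) with h|h
    · exact h
    · exfalso; rw [h, mul_zero] at hIneg; linarith
  refine ⟨hdx, ?_⟩
  by_contra hcon
  push_neg at hcon
  nlinarith
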